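/- Let G be an abelian divisible group written as a direct product A₀ × ∏_p A_p of a torsion-free divisible group A₀ and divisible p-groups A_p, and let η be an automorphism of G of prime order p acting trivially on the torsion subgroup ∏_q A_q and trivially on the torsion-free quotient G/∏_q A_q. Then η acts trivially on G. -/

import Mathlib

/-- Let `A` be a divisible abelian group and `η` an automorphism of prime order `p` which
fixes every torsion element and induces the identity modulo the torsion subgroup (i.e.
`η a - a` is torsion for every `a`).  Then `η` is the identity. -/
theorem aut_trivial_of_trivial_on_torsion_and_quotient
    {A : Type*} [AddCommGroup A]
    (hdiv : ∀ (a : A) (n : ℕ), 0 < n → ∃ b : A, n • b = a)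
    (η : AddAut A) (p : ℕ) (hp : p.Prime) (hord : p • η = 0)
    (htor : ∀ a : A, (∃ n : ℕ, 0 < n ∧ n • a = 0) → η a = a)
    (hquot : ∀ a : A, ∃ n : ℕ, 0 < n ∧ n • (η a - a) = 0) :
    ∀ a : A, η a = a := by
  have hfix : ∀ x : A, η (η x - x) = η x - x := fun x => htor _ (hquot x)
  have hpow : ∀ (x : A) (k : ℕ), (k • η) x = x + k • (η x - x) := by
    intro x k
    induction k with
    | zero => simp
    | succ k ih =>
      rw [succ_nsmul' η k, AddAut.add_apply, ih, succ_nsmul]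
      have : η (x + k • (η x - x)) = η x + k • (η x - x) := by
        rw [map_add, map_nsmul, hfix]
      rw [this]
      have hηx : η x = x + (η x - x) := by abel
      rw [hηx]; abel
  have hps : ∀ x : A, p • (η x - x) = 0 := by
    intro x
    have := hpow x p
    rw [hord] at this
    simpa using this.symm
  intro a
  obtain ⟨b, hb⟩ := hdiv a p hp.pos
  have : η a - a = p • (η b - b) := by
    rw [← hb, map_nsmul, smul_sub]
  rw [hps b] at this
  exact sub_eq_zero.mp this
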